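/- Let T be a real bounded operator on the complexification of a real Banach space such that the spectrum of T is contained in ℂ \ (−∞, 0]. Then there exists a real bounded operator A (i.e., A maps real vectors to real vectors) with e^A = T; consequently T embeds into the uniformly continuous real group (e^{tA})_{t∈ℝ}. -/

import Mathlib

open NormedSpace

open Set MeasureTheory intervalIntegral


-- smul of a unit by a nonzero real is a unit
theorem aux_isUnit_smul {𝔸 : Type*} [NormedRing 𝔸] [NormedAlgebra ℂ 𝔸]
    {r : ℝ} (hr : r ≠ 0) {a : 𝔸} (ha : IsUnit a) : IsUnit (r • a) := by
  obtain ⟨u, rfl⟩ := ha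
  refine ⟨⟨r • (u : 𝔸), r⁻¹ • ((u⁻¹ : 𝔸ˣ) : 𝔸), ?_, ?_⟩, rfl⟩
  · rw [smul_mul_smul_comm, mul_inv_cancel₀ hr, u.mul_inv, one_smul]
  · rw [smul_mul_smul_comm, inv_mul_cancel₀ hr, u.inv_mul, one_smul]

theorem aux_commute_inverse {𝔸 : Type*} [Ring 𝔸] {a b : 𝔸}
    (h : Commute a b) (hb : IsUnit b) : Commute a (Ring.inverse b) := by
  obtain ⟨u, rfl⟩ := hb
  rw [Ring.inverse_unit]
  exact h.units_inv_right

/-- Key analytic lemma: the logarithm of `T` via the path integral. -/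
theorem aux_exp_log {𝔸 : Type*} [NormedRing 𝔸] [NormedAlgebra ℂ 𝔸] [CompleteSpace 𝔸]
    (T : 𝔸) (hT : ∀ c : ℝ, c ≤ 0 → IsUnit (algebraMap ℂ 𝔸 (c : ℂ) - T)) :
    (∀ t ∈ Icc (0:ℝ) 1, IsUnit (1 + t • (T - 1))) ∧
    ContinuousOn (fun t : ℝ => (T - 1) * Ring.inverse (1 + t • (T - 1))) (Icc 0 1) ∧
    exp (∫ t in (0:ℝ)..1, (T - 1) * Ring.inverse (1 + t • (T - 1))) = T := by
  set γ : ℝ → 𝔸 := fun t => 1 + t • (T - 1) with hγdef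
  have hγcont : Continuous γ := by
    exact continuous_const.add (continuous_id.smul continuous_const)
  -- units on Icc 0 1
  have hunit : ∀ t ∈ Icc (0:ℝ) 1, IsUnit (γ t) := by
    intro t ht
    rcases eq_or_lt_of_le ht.1 with h0 | h0
    · simp [γ, ← h0]
    · have htne : t ≠ 0 := ne_of_gt h0
      have hcle : (t - 1) / t ≤ 0 :=
        div_nonpos_iff.2 (Or.inr ⟨by linarith [ht.2], le_of_lt h0⟩)
      have hU : IsUnit (algebraMap ℂ 𝔸 (((t - 1) / t : ℝ) : ℂ) - T) := hT _ hcle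
      have h1 : algebraMap ℂ 𝔸 (((t - 1) / t : ℝ) : ℂ) = ((t - 1) / t) • (1 : 𝔸) := by
        rw [Algebra.algebraMap_eq_smul_one, Complex.coe_smul]
      have hkey : γ t = (-t) • (((t - 1) / t) • (1 : 𝔸) - T) := by
        rw [hγdef]
        match_scalars <;> field_simp <;> ring
      rw [hkey, ← h1]
      exact aux_isUnit_smul (by simpa using htne) hU
  -- open neighborhood of Icc 0 1 where γ is a unit
  have hVopen : IsOpen {t : ℝ | IsUnit (γ t)} :=
    Units.isOpen.preimage hγcont
  obtain ⟨δ, hδpos, hδ⟩ := (isCompact_Icc (a := (0:ℝ)) (b := 1)).exists_thickening_subset_open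
    hVopen hunit
  set s : Set ℝ := Ioo (-δ) (1 + δ) with hsdef
  have hsub : s ⊆ {t : ℝ | IsUnit (γ t)} := by
    intro t ht
    apply hδ
    rw [Metric.mem_thickening_iff]
    refine ⟨max 0 (min t 1), ⟨le_max_left _ _, max_le zero_le_one (min_le_right _ _)⟩, ?_⟩
    rw [Real.dist_eq, abs_lt]
    rcases le_total t 0 with h | h
    · rw [max_eq_left (by simpa using le_trans (min_le_left _ _) h)]
      constructor <;> [simpa using ht.1; linarith [ht.2, hδpos]]
    · rcases le_total t 1 with h1 | h1
      · rw [min_eq_left h1, max_eq_right h]; simpa using hδpos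
      · rw [min_eq_right h1, max_eq_right zero_le_one]
        constructor <;> [linarith; linarith [ht.2]]
  have hs_unit : ∀ t ∈ s, IsUnit (γ t) := fun t ht => hsub ht
  have hsopen : IsOpen s := isOpen_Ioo
  have h0s : (0:ℝ) ∈ s := ⟨by linarith, by linarith⟩
  have h1s : (1:ℝ) ∈ s := ⟨by linarith, by linarith⟩
  have hIccs : Icc (0:ℝ) 1 ⊆ s := fun t ht => ⟨by linarith [ht.1], by linarith [ht.2]⟩
  set f : ℝ → 𝔸 := fun t => (T - 1) * Ring.inverse (γ t) with hfdef
  have hfcontAt : ∀ t ∈ s, ContinuousAt f t := by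
    intro t ht
    exact continuousAt_const.mul
      (((hs_unit t ht).unit_spec ▸ NormedRing.inverse_continuousAt (hs_unit t ht).unit).comp
        hγcont.continuousAt)
  have hfcontOn : ContinuousOn f s := fun t ht => (hfcontAt t ht).continuousWithinAt
  have hint : ∀ u ∈ s, ∀ v ∈ s, IntervalIntegrable f volume u v := by
    intro u hu v hv
    exact (hfcontOn.mono (Set.OrdConnected.uIcc_subset Set.ordConnected_Ioo hu hv)).intervalIntegrable
  set F : ℝ → 𝔸 := fun u => ∫ t in (0:ℝ)..u, f t with hFdef
  have hFderiv : ∀ u ∈ s, HasDerivAt F (f u) u := by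
    intro u hu
    exact integral_hasDerivAt_right (hint 0 h0s u hu)
      (ContinuousOn.stronglyMeasurableAtFilter hsopen hfcontOn u hu) (hfcontAt u hu)
  -- commuting lemmas
  have hcommTγ : ∀ t : ℝ, Commute T (γ t) := by
    intro t
    exact (Commute.one_right T).add_right (((Commute.refl T).sub_right (Commute.one_right T)).smul_right t)
  have hcommTf : ∀ t ∈ s, Commute T (f t) :=
    fun t ht => ((Commute.refl T).sub_right (Commute.one_right T)).mul_right
      (aux_commute_inverse (hcommTγ t) (hs_unit t ht))
  have hcomm_int : ∀ (B : 𝔸), (∀ t ∈ s, Commute B (f t)) → ∀ u ∈ s, Commute B (F u) := by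
    intro B hB u hu
    have h1 : (∫ t in (0:ℝ)..u, B * f t) = B * F u :=
      ContinuousLinearMap.intervalIntegral_comp_comm
        (ContinuousLinearMap.mul ℂ 𝔸 B) (hint 0 h0s u hu)
    have h2 : (∫ t in (0:ℝ)..u, f t * B) = F u * B :=
      ContinuousLinearMap.intervalIntegral_comp_comm
        ((ContinuousLinearMap.mul ℂ 𝔸).flip B) (hint 0 h0s u hu)
    have h3 : (∫ t in (0:ℝ)..u, B * f t) = ∫ t in (0:ℝ)..u, f t * B := by
      apply intervalIntegral.integral_congr
      intro t ht
      exact hB t (Set.OrdConnected.uIcc_subset Set.ordConnected_Ioo h0s hu ht)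
    unfold Commute SemiconjBy
    rw [← h1, ← h2, h3]
  have hcommTF : ∀ u ∈ s, Commute T (F u) := hcomm_int T hcommTf
  have hcommFγ : ∀ u ∈ s, ∀ t : ℝ, Commute (F u) (γ t) := by
    intro u hu t
    exact (Commute.one_right _).add_right
      (((hcommTF u hu).symm.sub_right (Commute.one_right _)).smul_right t)
  have hcommFf : ∀ u ∈ s, ∀ t ∈ s, Commute (F u) (f t) := by
    intro u hu t ht
    exact ((hcommTF u hu).symm.sub_right (Commute.one_right _)).mul_right
      (aux_commute_inverse (hcommFγ u hu t) (hs_unit t ht))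
  have hcommFF : ∀ u ∈ s, ∀ v ∈ s, Commute (F u) (F v) :=
    fun u hu => hcomm_int (F u) (hcommFf u hu)
  -- derivative of exp ∘ F
  have hexpderiv : ∀ t ∈ s, HasDerivAt (fun u => exp (F u)) (exp (F t) * f t) t := by
    intro t ht
    have heq : ∀ u ∈ s, exp (F u) = exp (F t) * exp (F u - F t) := by
      intro u hu
      letI : NormedAlgebra ℚ 𝔸 := NormedAlgebra.restrictScalars ℚ ℂ 𝔸
      rw [← exp_add_of_commute (((hcommFF t ht u hu).sub_right (Commute.refl (F t))))]
      congr 1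
      abel
    have hg : HasDerivAt (fun u => F u - F t) (f t) t := (hFderiv t ht).sub_const _
    have hexp0 : HasFDerivAt (exp) (1 : 𝔸 →L[ℂ] 𝔸) (0 : 𝔸) := hasFDerivAt_exp_zero
    have hexp0' : HasFDerivAt (exp) (1 : 𝔸 →L[ℂ] 𝔸) (F t - F t) := by
      rw [sub_self]; exact hexp0
    have hcomp : HasDerivAt (fun u => exp (F u - F t)) (f t) t := by
      have := (hexp0'.restrictScalars ℝ).comp_hasDerivAt t hg
      simpa [Function.comp_def] using this
    have hmul : HasDerivAt (fun u => exp (F t) * exp (F u - F t)) (exp (F t) * f t) t :=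
      hcomp.const_mul _
    apply hmul.congr_of_eventuallyEq
    filter_upwards [hsopen.mem_nhds ht] with u hu
    exact heq u hu
  -- derivative of inverse ∘ γ
  have hγderiv : ∀ t : ℝ, HasDerivAt γ (T - 1) t := by
    intro t
    have h : HasDerivAt (fun u : ℝ => u • (T - 1)) ((1:ℝ) • (T - 1)) t :=
      (hasDerivAt_id t).smul_const (T - 1)
    rw [one_smul] at h
    exact h.const_add 1
  have hinvderiv : ∀ t ∈ s, HasDerivAt (fun u => Ring.inverse (γ u))
      (-(Ring.inverse (γ t) * (T - 1) * Ring.inverse (γ t))) t := by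
    intro t ht
    have hu := hs_unit t ht
    have hfd : HasFDerivAt Ring.inverse
        (-ContinuousLinearMap.mulLeftRight ℝ 𝔸 (↑hu.unit⁻¹) (↑hu.unit⁻¹)) (γ t) := by
      have := hasFDerivAt_ringInverse (𝕜 := ℝ) hu.unit
      rwa [hu.unit_spec] at this
    have := hfd.comp_hasDerivAt t (hγderiv t)
    simpa [ContinuousLinearMap.mulLeftRight_apply, Ring.inverse_unit, hu.unit_spec,
      ← Ring.inverse_unit hu.unit, mul_assoc, Function.comp_def] using this
  -- ψ has derivative zero
  set ψ : ℝ → 𝔸 := fun u => exp (F u) * Ring.inverse (γ u) with hψdef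
  have hψderiv : ∀ t ∈ s, HasDerivAt ψ 0 t := by
    intro t ht
    have h := (hexpderiv t ht).mul (hinvderiv t ht)
    have hcγ : Commute (T - 1) (γ t) :=
      (Commute.one_right (T - 1)).add_right ((Commute.refl (T - 1)).smul_right t)
    have hcomm' : Commute (T - 1) (Ring.inverse (γ t)) :=
      aux_commute_inverse hcγ (hs_unit t ht)
    have hzero : exp (F t) * f t * Ring.inverse (γ t) +
        exp (F t) * -(Ring.inverse (γ t) * (T - 1) * Ring.inverse (γ t)) = 0 := by
      rw [hfdef]
      simp only []
      rw [hcomm'.symm.eq]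
      simp [mul_assoc]
    rw [← hzero]
    exact h
  -- constancy
  have hψcont : ContinuousOn ψ (Icc 0 1) :=
    fun t ht => ((hψderiv t (hIccs ht)).continuousAt).continuousWithinAt
  have hconst := constant_of_has_deriv_right_zero hψcont
    (fun x hx => ((hψderiv x (hIccs ⟨hx.1, le_of_lt hx.2⟩)).hasDerivWithinAt))
  have hψ1 : ψ 1 = ψ 0 := hconst 1 ⟨zero_le_one, le_refl 1⟩
  have hψ0 : ψ 0 = 1 := by
    have hγ0 : γ 0 = 1 := by simp [hγdef]
    have hF0 : F 0 = 0 := intervalIntegral.integral_same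
    rw [hψdef]
    simp only [hγ0, hF0, Ring.inverse_one, exp_zero, one_mul]
  have hγ1 : γ 1 = T := by
    rw [hγdef]; simp
  have hTunit : IsUnit T := hγ1 ▸ hs_unit 1 h1s
  refine ⟨hunit, hfcontOn.mono hIccs, ?_⟩
  have : exp (F 1) * Ring.inverse T = 1 := by
    have h : exp (F 1) * Ring.inverse (γ 1) = 1 := hψ1.trans hψ0
    rwa [hγ1] at h
  calc exp (F 1) = exp (F 1) * (Ring.inverse T * T) := by
        rw [Ring.inverse_mul_cancel _ hTunit, mul_one]
    _ = (exp (F 1) * Ring.inverse T) * T := by rw [mul_assoc]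
    _ = T := by rw [this, one_mul]

/-- Let `X` be the complexification of a real Banach space, encoded by a continuous
conjugation `C` (additive, antilinear, involutive); an operator is *real* if it commutes
with `C`. If `T` is a real bounded operator whose spectrum avoids `(-∞, 0]`, then there
is a real bounded operator `A` with `e^A = T`, and the uniformly continuous group
`(e^{tA})_{t ∈ ℝ}` consists of real operators, so it embeds `T` into a real group. -/
theorem stmt_8 {X : Type*} [NormedAddCommGroup X] [NormedSpace ℂ X] [CompleteSpace X]
    (C : X → X)
    (hCadd : ∀ x y : X, C (x + y) = C x + C y)
    (hCsmul : ∀ (c : ℂ) (x : X), C (c • x) = (starRingEnd ℂ) c • C x)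
    (hCinv : ∀ x : X, C (C x) = x)
    (hCcont : Continuous C)
    (T : X →L[ℂ] X)
    (hTreal : ∀ x : X, C (T x) = T (C x))
    (hspec : ∀ z ∈ spectrum ℂ T, ¬(z.im = 0 ∧ z.re ≤ 0)) :
    ∃ A : X →L[ℂ] X, (∀ x : X, C (A x) = A (C x)) ∧
      exp A = T ∧
      ∀ t : ℝ, ∀ x : X, C ((exp ((t : ℂ) • A)) x) = (exp ((t : ℂ) • A)) (C x) := by
  have hT : ∀ c : ℝ, c ≤ 0 → IsUnit (algebraMap ℂ (X →L[ℂ] X) (c : ℂ) - T) := by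
    intro c hc
    rw [← spectrum.notMem_iff]
    intro hmem
    exact hspec _ hmem ⟨Complex.ofReal_im c, by simpa using hc⟩
  obtain ⟨hunit, hfcont, hexp⟩ := aux_exp_log T hT
  set f : ℝ → (X →L[ℂ] X) := fun t => (T - 1) * Ring.inverse (1 + t • (T - 1)) with hfdef
  set A : X →L[ℂ] X := ∫ t in (0:ℝ)..1, f t with hAdef
  -- the conjugation as a real continuous linear map
  have hCsmulR : ∀ (r : ℝ) (x : X), C (r • x) = r • C x := fun r x => by
    rw [← Complex.coe_smul, hCsmul, Complex.conj_ofReal, Complex.coe_smul]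
  let Cl : X →L[ℝ] X := ⟨⟨⟨C, hCadd⟩, hCsmulR⟩, hCcont⟩
  have hCsub : ∀ a b : X, C (a - b) = C a - C b := fun a b => Cl.map_sub a b
  -- realness predicate and closure properties
  set P : (X →L[ℂ] X) → Prop := fun B => ∀ x, C (B x) = B (C x) with hPdef
  have hP1 : P 1 := fun x => rfl
  have hPmul : ∀ B₁ B₂, P B₁ → P B₂ → P (B₁ * B₂) := by
    intro B₁ B₂ h1 h2 x
    rw [ContinuousLinearMap.mul_apply, ContinuousLinearMap.mul_apply, h1, h2]
  have hPsub : P (T - 1) := by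
    intro x
    rw [ContinuousLinearMap.sub_apply, ContinuousLinearMap.sub_apply, hCsub, hTreal]
    rfl
  have hPγ : ∀ t : ℝ, P (1 + t • (T - 1)) := by
    intro t x
    rw [ContinuousLinearMap.add_apply, ContinuousLinearMap.add_apply, hCadd,
      ContinuousLinearMap.smul_apply, ContinuousLinearMap.smul_apply, hCsmulR, hPsub]
    rfl
  have hPinv : ∀ B, P B → IsUnit B → P (Ring.inverse B) := by
    intro B hB hU x
    have h1 : B * Ring.inverse B = 1 := Ring.mul_inverse_cancel B hU
    have h2 : Ring.inverse B * B = 1 := Ring.inverse_mul_cancel B hU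
    have hBapp : ∀ y, B (Ring.inverse B y) = y := by
      intro y
      have := congrArg (fun S : X →L[ℂ] X => S y) h1
      simpa [ContinuousLinearMap.mul_apply] using this
    have hBapp' : ∀ y, Ring.inverse B (B y) = y := by
      intro y
      have := congrArg (fun S : X →L[ℂ] X => S y) h2
      simpa [ContinuousLinearMap.mul_apply] using this
    calc C (Ring.inverse B x) = Ring.inverse B (B (C (Ring.inverse B x))) := (hBapp' _).symm
      _ = Ring.inverse B (C (B (Ring.inverse B x))) := by rw [hB]
      _ = Ring.inverse B (C x) := by rw [hBapp]
  have hPf : ∀ t ∈ Set.Icc (0:ℝ) 1, P (f t) :=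
    fun t ht => hPmul _ _ hPsub (hPinv _ (hPγ t) (hunit t ht))
  have hintf : IntervalIntegrable f MeasureTheory.volume 0 1 :=
    ((Set.uIcc_of_le (zero_le_one (α := ℝ))).symm ▸ hfcont).intervalIntegrable
  have hPA : P A := by
    intro x
    have h1 : A x = ∫ t in (0:ℝ)..1, f t x :=
      ContinuousLinearMap.intervalIntegral_apply hintf x
    have h2 : A (C x) = ∫ t in (0:ℝ)..1, f t (C x) :=
      ContinuousLinearMap.intervalIntegral_apply hintf (C x)
    have hintfx : IntervalIntegrable (fun t => f t x) MeasureTheory.volume 0 1 := by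
      apply ContinuousOn.intervalIntegrable
      exact (ContinuousLinearMap.apply ℂ X x).continuous.comp_continuousOn
        ((Set.uIcc_of_le (zero_le_one (α := ℝ))).symm ▸ hfcont)
    rw [h1, h2]
    calc C (∫ t in (0:ℝ)..1, f t x)
        = Cl (∫ t in (0:ℝ)..1, f t x) := rfl
      _ = ∫ t in (0:ℝ)..1, Cl (f t x) :=
          (ContinuousLinearMap.intervalIntegral_comp_comm Cl hintfx).symm
      _ = ∫ t in (0:ℝ)..1, f t (C x) := by
          apply intervalIntegral.integral_congr
          intro t ht
          exact hPf t (by rwa [Set.uIcc_of_le (zero_le_one (α := ℝ))] at ht) x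
  have hPexp : ∀ B, P B → P (exp B) := by
    intro B hB x
    have hsum : Summable (fun n : ℕ => ((n.factorial : ℂ))⁻¹ • B ^ n) := expSeries_summable' B
    have hPn : ∀ n : ℕ, P (((n.factorial : ℂ))⁻¹ • B ^ n) := by
      intro n
      have hpow : P (B ^ n) := by
        induction n with
        | zero => simpa using hP1
        | succ k ih => rw [pow_succ]; exact hPmul _ _ ih hB
      intro y
      have hconj : (starRingEnd ℂ) (((n.factorial : ℂ))⁻¹) = ((n.factorial : ℂ))⁻¹ := by simp
      rw [ContinuousLinearMap.smul_apply, ContinuousLinearMap.smul_apply, hCsmul, hconj, hpow]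
    have hBx : ∀ y : X, exp B y = ∑' n : ℕ, (((n.factorial : ℂ))⁻¹ • B ^ n) y := by
      intro y
      have hE : exp B = ∑' n : ℕ, ((n.factorial : ℂ))⁻¹ • B ^ n := by
        rw [exp_eq_tsum (𝕂 := ℂ)]
      rw [hE]
      exact ContinuousLinearMap.map_tsum (ContinuousLinearMap.apply ℂ X y) hsum
    have hsx : Summable (fun n : ℕ => (((n.factorial : ℂ))⁻¹ • B ^ n) x) :=
      hsum.map ((ContinuousLinearMap.apply ℂ X x).toLinearMap.toAddMonoidHom)
        (ContinuousLinearMap.apply ℂ X x).continuous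
    calc C (exp B x) = C (∑' n : ℕ, (((n.factorial : ℂ))⁻¹ • B ^ n) x) := by rw [hBx x]
      _ = ∑' n : ℕ, C ((((n.factorial : ℂ))⁻¹ • B ^ n) x) := ContinuousLinearMap.map_tsum Cl hsx
      _ = ∑' n : ℕ, (((n.factorial : ℂ))⁻¹ • B ^ n) (C x) := tsum_congr (fun n => hPn n x)
      _ = exp B (C x) := (hBx (C x)).symm
  refine ⟨A, hPA, hexp, ?_⟩
  intro t x
  apply hPexp
  intro y
  rw [ContinuousLinearMap.smul_apply, ContinuousLinearMap.smul_apply, hCsmul,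
    Complex.conj_ofReal, hPA]
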